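/- On the 2D torus (or any setting where P commutes with powers of −Δ), for a divergence-free ξ ∈ W^{k+3,∞} and f ∈ W^{k+3,2}, the commutator [Δ, B] := Δ B − B Δ with B = L_ξ + T_ξ is an operator of second order: ‖[Δ, B] f‖_{W^{k,2}} ≤ c ‖ξ‖_{W^{k+3,∞}} ‖f‖_{W^{k+2,2}}; i.e. the commutator loses one fewer derivative than the naive count. -/

import Mathlib

open MeasureTheory

noncomputable section

abbrev E2 : Type := EuclideanSpace ℝ (Fin 2)

/-- The `j`-th partial derivative of a vector field. -/
def pd (j : Fin 2) (f : E2 → E2) (x : E2) : E2 :=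
  fderiv ℝ f x (EuclideanSpace.single j 1)

/-- The componentwise Laplacian `Δ f = Σ_j ∂_j ∂_j f`. -/
def lap (f : E2 → E2) (x : E2) : E2 :=
  ∑ j : Fin 2, fderiv ℝ (fun y => pd j f y) x (EuclideanSpace.single j 1)

/-- The transport term `L_ξ f = Σ_j ξ^j ∂_j f`. -/
def Ladv (ξ f : E2 → E2) (x : E2) : E2 :=
  ∑ j : Fin 2, (ξ x j) • pd j f x

/-- The stretching term `T_ξ f = Σ_j f^j ∇ξ^j`. -/
def Tstr (ξ f : E2 → E2) (x : E2) : E2 :=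
  ∑ j : Fin 2, (f x j) • gradient (fun y => ξ y j) x

/-- The SALT operator `B f = L_ξ f + T_ξ f`. -/
def Bop (ξ f : E2 → E2) (x : E2) : E2 := Ladv ξ f x + Tstr ξ f x

/-- The commutator `[Δ, B] f = Δ(B f) − B(Δ f)`. -/
def commDB (ξ f : E2 → E2) (x : E2) : E2 :=
  lap (Bop ξ f) x - Bop ξ (fun y => lap f y) x

/-- The `W^{k,2}(O)` norm built from iterated derivatives. -/
def nHk (O : Set E2) (k : ℕ) (f : E2 → E2) : ℝ :=
  Real.sqrt (∑ i ∈ Finset.range (k + 1), ∫ x in O, ‖iteratedFDeriv ℝ i f x‖ ^ 2)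

-- scalar partial derivative
def pds (j : Fin 2) (a : E2 → ℝ) (x : E2) : ℝ :=
  fderiv ℝ a x (EuclideanSpace.single j 1)
-- component
def cpt (j : Fin 2) (f : E2 → E2) : E2 → ℝ := fun x => f x j

lemma lap_eq (f : E2 → E2) (x : E2) : lap f x = ∑ m : Fin 2, pd m (pd m f) x := rfl

lemma contDiff_cpt {n : WithTop ℕ∞} {g : E2 → E2} (h : ContDiff ℝ n g) (j : Fin 2) :
    ContDiff ℝ n (cpt j g) := (EuclideanSpace.proj (𝕜 := ℝ) j).contDiff.comp h

lemma contDiff_pd {n m : WithTop ℕ∞} {f : E2 → E2} (h : ContDiff ℝ n f) (hm : m + 1 ≤ n)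
    (j : Fin 2) : ContDiff ℝ m (pd j f) :=
  (h.fderiv_right hm).clm_apply contDiff_const

lemma contDiff_pds {n m : WithTop ℕ∞} {a : E2 → ℝ} (h : ContDiff ℝ n a) (hm : m + 1 ≤ n)
    (j : Fin 2) : ContDiff ℝ m (pds j a) :=
  (h.fderiv_right hm).clm_apply contDiff_const

def wv (ξ : E2 → E2) (j : Fin 2) : E2 → E2 := fun y => gradient (fun z => ξ z j) y

lemma wv_eq_comp (ξ : E2 → E2) (j : Fin 2) :
    wv ξ j = (InnerProductSpace.toDual ℝ E2).symm ∘ (fderiv ℝ (cpt j ξ)) := rfl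

lemma contDiff_wv {n m : WithTop ℕ∞} {ξ : E2 → E2} (h : ContDiff ℝ n ξ) (hm : m + 1 ≤ n)
    (j : Fin 2) : ContDiff ℝ m (wv ξ j) := by
  rw [wv_eq_comp]
  exact ((InnerProductSpace.toDual ℝ E2).symm.contDiff).comp
    ((contDiff_cpt h j).fderiv_right hm)

lemma pd_smul {a : E2 → ℝ} {v : E2 → E2} {x : E2} (ha : DifferentiableAt ℝ a x)
    (hv : DifferentiableAt ℝ v x) (m : Fin 2) :
    pd m (fun y => a y • v y) x = pds m a x • v x + a x • pd m v x := by
  unfold pd pds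
  rw [fderiv_fun_smul ha hv]
  simp [ContinuousLinearMap.smulRight_apply]
  abel

lemma pd_add {g h : E2 → E2} {x : E2} (hg : DifferentiableAt ℝ g x)
    (hh : DifferentiableAt ℝ h x) (m : Fin 2) :
    pd m (fun y => g y + h y) x = pd m g x + pd m h x := by
  unfold pd; rw [fderiv_fun_add hg hh]; simp

lemma pd_sum {F : Fin 2 → E2 → E2} {x : E2} (h : ∀ j, DifferentiableAt ℝ (F j) x) (m : Fin 2) :
    pd m (fun y => ∑ j : Fin 2, F j y) x = ∑ j : Fin 2, pd m (F j) x := by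
  unfold pd; rw [fderiv_fun_sum (fun j _ => h j)]; simp

lemma pd_comm {g : E2 → E2} {x : E2} (hg : ContDiffAt ℝ 2 g x) (i j : Fin 2) :
    pd i (pd j g) x = pd j (pd i g) x := by
  have hsymm := hg.isSymmSndFDerivAt (by simp [minSmoothness_of_isRCLikeNormedField])
  have hd : DifferentiableAt ℝ (fderiv ℝ g) x := by
    have := (hg.fderiv_right (m := 1) (le_refl 2)).differentiableAt one_ne_zero
    exact this
  have key : ∀ u w : E2, pd i (fun y => fderiv ℝ g y u) x = fderiv ℝ (fderiv ℝ g) x (EuclideanSpace.single i 1) u := by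
    intro u w
    unfold pd
    rw [fderiv_clm_apply hd (differentiableAt_const u)]
    simp
  unfold pd
  have e1 : (fun y => fderiv ℝ g y (EuclideanSpace.single j 1)) = fun y => fderiv ℝ g y (EuclideanSpace.single j 1) := rfl
  calc fderiv ℝ (fun y => fderiv ℝ g y (EuclideanSpace.single j 1)) x (EuclideanSpace.single i 1)
      = fderiv ℝ (fderiv ℝ g) x (EuclideanSpace.single i 1) (EuclideanSpace.single j 1) := by
        rw [fderiv_clm_apply hd (differentiableAt_const _)]; simp
    _ = fderiv ℝ (fderiv ℝ g) x (EuclideanSpace.single j 1) (EuclideanSpace.single i 1) := hsymm _ _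
    _ = fderiv ℝ (fun y => fderiv ℝ g y (EuclideanSpace.single i 1)) x (EuclideanSpace.single j 1) := by
        rw [fderiv_clm_apply hd (differentiableAt_const _)]; simp

lemma cpt_pd {f : E2 → E2} {x : E2} (hf : DifferentiableAt ℝ f x) (j m : Fin 2) :
    (pd m f x) j = pds m (cpt j f) x := by
  unfold pd pds cpt
  have : (fun x => f x j) = (EuclideanSpace.proj (𝕜 := ℝ) j) ∘ f := rfl
  rw [this, fderiv_comp x (ContinuousLinearMap.differentiableAt _) hf,
    ContinuousLinearMap.fderiv]
  rfl

lemma lap_sum_smul (a : Fin 2 → E2 → ℝ) (v : Fin 2 → E2 → E2)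
    (ha : ∀ j, ContDiff ℝ 2 (a j)) (hv : ∀ j, ContDiff ℝ 2 (v j)) (x : E2) :
    lap (fun y => ∑ j : Fin 2, a j y • v j y) x =
      ∑ m : Fin 2, ∑ j : Fin 2,
        (pds m (pds m (a j)) x • v j x + (2 * pds m (a j) x) • pd m (v j) x
          + a j x • pd m (pd m (v j)) x) := by
  have h21 : (1 : WithTop ℕ∞) + 1 ≤ 2 := by norm_num
  have had : ∀ j, Differentiable ℝ (a j) := fun j => (ha j).differentiable (by norm_num)
  have hvd : ∀ j, Differentiable ℝ (v j) := fun j => (hv j).differentiable (by norm_num)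
  have hpa : ∀ j m, Differentiable ℝ (pds m (a j)) := fun j m =>
    (contDiff_pds (ha j) h21 m).differentiable one_ne_zero
  have hpv : ∀ j m, Differentiable ℝ (pd m (v j)) := fun j m =>
    (contDiff_pd (hv j) h21 m).differentiable one_ne_zero
  rw [lap_eq]
  refine Finset.sum_congr rfl (fun m _ => ?_)
  have h1 : pd m (fun y => ∑ j : Fin 2, a j y • v j y)
      = fun y => ∑ j : Fin 2, (pds m (a j) y • v j y + a j y • pd m (v j) y) := by
    funext y
    rw [pd_sum (fun j => ((had j y).fun_smul (hvd j y))) m]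
    exact Finset.sum_congr rfl (fun j _ => pd_smul (had j y) (hvd j y) m)
  rw [h1, pd_sum (fun j => (((hpa j m x).fun_smul (hvd j x)).fun_add ((had j x).fun_smul (hpv j m x)))) m]
  refine Finset.sum_congr rfl (fun j _ => ?_)
  rw [pd_add ((hpa j m x).fun_smul (hvd j x)) ((had j x).fun_smul (hpv j m x)) m,
    pd_smul (hpa j m x) (hvd j x) m, pd_smul (had j x) (hpv j m x) m,
    two_mul, add_smul]
  abel

lemma h23 : ((2 : WithTop ℕ∞) + 1 ≤ 3) := by norm_num
lemma h123 : ((1 : WithTop ℕ∞) + 1 ≤ 2) := by norm_num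

lemma pd_lap {f : E2 → E2} (hf : ContDiff ℝ 3 f) (j : Fin 2) (x : E2) :
    pd j (fun y => lap f y) x = ∑ m : Fin 2, pd m (pd m (pd j f)) x := by
  have hd : ∀ m : Fin 2, DifferentiableAt ℝ (pd m (pd m f)) x := fun m =>
    ((contDiff_pd (contDiff_pd hf h23 m) h123 m).differentiable one_ne_zero).differentiableAt
  have h1 : (fun y => lap f y) = fun y => ∑ m : Fin 2, pd m (pd m f) y := by
    funext y; rw [lap_eq]
  rw [h1, pd_sum hd j]
  refine Finset.sum_congr rfl (fun m _ => ?_)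
  have hswap : pd j (pd m f) = pd m (pd j f) := by
    funext y
    exact pd_comm ((hf.of_le (by norm_num)).contDiffAt) j m
  calc pd j (pd m (pd m f)) x = pd m (pd j (pd m f)) x :=
        pd_comm ((contDiff_pd hf h23 m).contDiffAt) j m
    _ = pd m (pd m (pd j f)) x := by rw [hswap]

lemma lap_apply_cpt {f : E2 → E2} (hf : ContDiff ℝ 3 f) (j : Fin 2) (x : E2) :
    lap f x j = ∑ m : Fin 2, pds m (pds m (cpt j f)) x := by
  rw [lap_eq]
  have : (∑ m : Fin 2, pd m (pd m f) x) j = ∑ m : Fin 2, (pd m (pd m f) x) j := by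
    simp only [WithLp.ofLp_sum, Finset.sum_apply]
  rw [this]
  refine Finset.sum_congr rfl (fun m _ => ?_)
  have hdm : DifferentiableAt ℝ (pd m f) x :=
    ((contDiff_pd hf h23 m).differentiable (by norm_num)).differentiableAt
  rw [cpt_pd hdm j m]
  have : cpt j (pd m f) = pds m (cpt j f) := by
    funext y
    exact cpt_pd ((hf.differentiable (by norm_num)).differentiableAt) j m
  rw [this]

lemma BopLap {ξ f : E2 → E2} (hξ : ContDiff ℝ 3 ξ) (hf : ContDiff ℝ 3 f) (x : E2) :
    Bop ξ (fun y => lap f y) x =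
      (∑ m : Fin 2, ∑ j : Fin 2, cpt j ξ x • pd m (pd m (pd j f)) x)
      + ∑ m : Fin 2, ∑ j : Fin 2, pds m (pds m (cpt j f)) x • wv ξ j x := by
  show (∑ j : Fin 2, (ξ x j) • pd j (fun y => lap f y) x)
      + (∑ j : Fin 2, (lap f x j) • gradient (fun y => ξ y j) x) = _
  congr 1
  · rw [Finset.sum_comm]
    refine Finset.sum_congr rfl (fun j _ => ?_)
    rw [pd_lap hf j x, Finset.smul_sum]
    rfl
  · rw [Finset.sum_comm]
    refine Finset.sum_congr rfl (fun j _ => ?_)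
    rw [lap_apply_cpt hf j x, Finset.sum_smul]
    rfl

def Phi (ξ f : E2 → E2) (x : E2) : E2 :=
  ∑ m : Fin 2, ∑ j : Fin 2,
    ( pds m (pds m (cpt j ξ)) x • pd j f x
    + (2 * pds m (cpt j ξ) x) • pd m (pd j f) x
    + ((2 * pds m (cpt j f) x) • pd m (wv ξ j) x
    + cpt j f x • pd m (pd m (wv ξ j)) x) )

lemma lap_add {g h : E2 → E2} (hg : ContDiff ℝ 2 g) (hh : ContDiff ℝ 2 h) (x : E2) :
    lap (fun y => g y + h y) x = lap g x + lap h x := by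
  have hgd : Differentiable ℝ g := hg.differentiable (by norm_num)
  have hhd : Differentiable ℝ h := hh.differentiable (by norm_num)
  have hpg : ∀ m : Fin 2, Differentiable ℝ (pd m g) :=
    fun m => (contDiff_pd hg h123 m).differentiable one_ne_zero
  have hph : ∀ m : Fin 2, Differentiable ℝ (pd m h) :=
    fun m => (contDiff_pd hh h123 m).differentiable one_ne_zero
  rw [lap_eq, lap_eq, lap_eq, ← Finset.sum_add_distrib]
  refine Finset.sum_congr rfl (fun m _ => ?_)
  have h1 : pd m (fun y => g y + h y) = fun y => pd m g y + pd m h y := by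
    funext y; exact pd_add (hgd y) (hhd y) m
  rw [h1, pd_add (hpg m x) (hph m x) m]

lemma commDB_eq_Phi {ξ f : E2 → E2} (hξ : ContDiff ℝ 3 ξ) (hf : ContDiff ℝ 3 f) :
    commDB ξ f = Phi ξ f := by
  funext x
  have hcξ : ∀ j, ContDiff ℝ 2 (cpt j ξ) := fun j => (contDiff_cpt hξ j).of_le (by norm_num)
  have hcf : ∀ j, ContDiff ℝ 2 (cpt j f) := fun j => (contDiff_cpt hf j).of_le (by norm_num)
  have hpdf : ∀ j, ContDiff ℝ 2 (pd j f) := fun j => contDiff_pd hf h23 j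
  have hwv : ∀ j, ContDiff ℝ 2 (wv ξ j) := fun j => contDiff_wv hξ h23 j
  have hBop : Bop ξ f = fun y =>
      (∑ j : Fin 2, cpt j ξ y • pd j f y) + (∑ j : Fin 2, cpt j f y • wv ξ j y) := rfl
  have hLA : ContDiff ℝ 2 (fun y => ∑ j : Fin 2, cpt j ξ y • pd j f y) :=
    ContDiff.sum (fun j _ => (hcξ j).smul (hpdf j))
  have hTS : ContDiff ℝ 2 (fun y => ∑ j : Fin 2, cpt j f y • wv ξ j y) :=
    ContDiff.sum (fun j _ => (hcf j).smul (hwv j))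
  have key : lap (Bop ξ f) x =
      (∑ m : Fin 2, ∑ j : Fin 2,
        (pds m (pds m (cpt j ξ)) x • pd j f x + (2 * pds m (cpt j ξ) x) • pd m (pd j f) x
          + cpt j ξ x • pd m (pd m (pd j f)) x))
      + ∑ m : Fin 2, ∑ j : Fin 2,
        (pds m (pds m (cpt j f)) x • wv ξ j x + (2 * pds m (cpt j f) x) • pd m (wv ξ j) x
          + cpt j f x • pd m (pd m (wv ξ j)) x) := by
    rw [hBop, lap_add hLA hTS x, lap_sum_smul _ _ hcξ hpdf x, lap_sum_smul _ _ hcf hwv x]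
  show lap (Bop ξ f) x - Bop ξ (fun y => lap f y) x = Phi ξ f x
  rw [key, BopLap hξ hf x, Phi]
  rw [← Finset.sum_add_distrib, ← Finset.sum_add_distrib, ← Finset.sum_sub_distrib]
  refine Finset.sum_congr rfl (fun m _ => ?_)
  rw [← Finset.sum_add_distrib, ← Finset.sum_add_distrib, ← Finset.sum_sub_distrib]
  refine Finset.sum_congr rfl (fun j _ => ?_)
  abel

lemma norm_proj_le (j : Fin 2) : ‖(EuclideanSpace.proj (𝕜 := ℝ) j : E2 →L[ℝ] ℝ)‖ ≤ 1 := by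
  refine ContinuousLinearMap.opNorm_le_bound _ zero_le_one (fun x => ?_)
  rw [one_mul]
  have h : x j = inner ℝ x (EuclideanSpace.single j (1:ℝ)) := by
    rw [EuclideanSpace.inner_single_right]; simp
  show ‖x j‖ ≤ ‖x‖
  rw [Real.norm_eq_abs, h]
  calc |inner ℝ x (EuclideanSpace.single j (1:ℝ))| ≤ ‖x‖ * ‖EuclideanSpace.single j (1:ℝ)‖ :=
        abs_real_inner_le_norm _ _
    _ = ‖x‖ := by rw [EuclideanSpace.norm_single]; simp

lemma norm_cpt_le {g : E2 → E2} {N : ℕ} (hg : ContDiff ℝ (N : ℕ) g) {n : ℕ} (hn : n ≤ N)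
    (j : Fin 2) (x : E2) : ‖iteratedFDeriv ℝ n (cpt j g) x‖ ≤ ‖iteratedFDeriv ℝ n g x‖ := by
  have hcomp : cpt j g = (EuclideanSpace.proj (𝕜 := ℝ) j) ∘ g := rfl
  rw [hcomp, ContinuousLinearMap.iteratedFDeriv_comp_left _ hg.contDiffAt (by exact_mod_cast hn)]
  calc ‖(EuclideanSpace.proj (𝕜 := ℝ) j).compContinuousMultilinearMap (iteratedFDeriv ℝ n g x)‖
      ≤ ‖(EuclideanSpace.proj (𝕜 := ℝ) j : E2 →L[ℝ] ℝ)‖ * ‖iteratedFDeriv ℝ n g x‖ :=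
        ContinuousLinearMap.norm_compContinuousMultilinearMap_le _ _
    _ ≤ 1 * ‖iteratedFDeriv ℝ n g x‖ := by
        exact mul_le_mul_of_nonneg_right (norm_proj_le j) (norm_nonneg _)
    _ = _ := one_mul _

lemma norm_pds_le {a : E2 → ℝ} {N : ℕ} (ha : ContDiff ℝ (N : ℕ) a) {n : ℕ} (hn : n + 1 ≤ N)
    (m : Fin 2) (x : E2) :
    ‖iteratedFDeriv ℝ n (pds m a) x‖ ≤ ‖iteratedFDeriv ℝ (n + 1) a x‖ := by
  have hfd : ContDiff ℝ (n : ℕ) (fderiv ℝ a) :=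
    ha.fderiv_right (by exact_mod_cast hn)
  have h := norm_iteratedFDeriv_clm_apply_const (c := EuclideanSpace.single m 1)
    (f := fderiv ℝ a) (x := x) (n := n) hfd.contDiffAt le_rfl
  calc ‖iteratedFDeriv ℝ n (pds m a) x‖
      ≤ ‖EuclideanSpace.single m (1:ℝ)‖ * ‖iteratedFDeriv ℝ n (fderiv ℝ a) x‖ := h
    _ = ‖iteratedFDeriv ℝ (n + 1) a x‖ := by
        rw [EuclideanSpace.norm_single, norm_one, one_mul, norm_iteratedFDeriv_fderiv]

lemma norm_pd_le {f : E2 → E2} {N : ℕ} (hf : ContDiff ℝ (N : ℕ) f) {n : ℕ} (hn : n + 1 ≤ N)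
    (m : Fin 2) (x : E2) :
    ‖iteratedFDeriv ℝ n (pd m f) x‖ ≤ ‖iteratedFDeriv ℝ (n + 1) f x‖ := by
  have hfd : ContDiff ℝ (n : ℕ) (fderiv ℝ f) :=
    hf.fderiv_right (by exact_mod_cast hn)
  have h := norm_iteratedFDeriv_clm_apply_const (c := EuclideanSpace.single m 1)
    (f := fderiv ℝ f) (x := x) (n := n) hfd.contDiffAt le_rfl
  calc ‖iteratedFDeriv ℝ n (pd m f) x‖
      ≤ ‖EuclideanSpace.single m (1:ℝ)‖ * ‖iteratedFDeriv ℝ n (fderiv ℝ f) x‖ := h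
    _ = ‖iteratedFDeriv ℝ (n + 1) f x‖ := by
        rw [EuclideanSpace.norm_single, norm_one, one_mul, norm_iteratedFDeriv_fderiv]

lemma norm_wv_le {ξ : E2 → E2} {N : ℕ} (hξ : ContDiff ℝ (N : ℕ) ξ) {n : ℕ} (hn : n + 1 ≤ N)
    (j : Fin 2) (x : E2) :
    ‖iteratedFDeriv ℝ n (wv ξ j) x‖ ≤ ‖iteratedFDeriv ℝ (n + 1) ξ x‖ := by
  rw [wv_eq_comp ξ j,
    (InnerProductSpace.toDual ℝ E2).symm.norm_iteratedFDeriv_comp_left (fderiv ℝ (cpt j ξ)) x n,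
    norm_iteratedFDeriv_fderiv]
  exact norm_cpt_le hξ hn j x

lemma cdof {F' : Type*} [NormedAddCommGroup F'] [NormedSpace ℝ F'] {g : E2 → F'} {n m : ℕ}
    (h : ContDiff ℝ (n : ℕ) g) (hm : m ≤ n) : ContDiff ℝ (m : ℕ) g :=
  h.of_le (by exact_mod_cast hm)

lemma contDiff_pd_nat {f : E2 → E2} {N n : ℕ} (h : ContDiff ℝ (N : ℕ) f) (hn : n + 1 ≤ N)
    (j : Fin 2) : ContDiff ℝ (n : ℕ) (pd j f) := contDiff_pd h (by exact_mod_cast hn) j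

lemma contDiff_pds_nat {a : E2 → ℝ} {N n : ℕ} (h : ContDiff ℝ (N : ℕ) a) (hn : n + 1 ≤ N)
    (j : Fin 2) : ContDiff ℝ (n : ℕ) (pds j a) := contDiff_pds h (by exact_mod_cast hn) j

lemma contDiff_wv_nat {ξ : E2 → E2} {N n : ℕ} (h : ContDiff ℝ (N : ℕ) ξ) (hn : n + 1 ≤ N)
    (j : Fin 2) : ContDiff ℝ (n : ℕ) (wv ξ j) := contDiff_wv h (by exact_mod_cast hn) j

lemma smul_term_bound {s : E2 → ℝ} {v : E2 → E2} {i : ℕ} {x : E2} {A B : ℝ}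
    (hs : ContDiff ℝ (i : ℕ) s) (hv : ContDiff ℝ (i : ℕ) v)
    (hA : ∀ p, p ≤ i → ‖iteratedFDeriv ℝ p s x‖ ≤ A)
    (hB : ∀ p, p ≤ i → ‖iteratedFDeriv ℝ p v x‖ ≤ B)
    (hA0 : 0 ≤ A) (hB0 : 0 ≤ B) :
    ‖iteratedFDeriv ℝ i (fun y => s y • v y) x‖ ≤ 2 ^ i * (A * B) := by
  have h := norm_iteratedFDeriv_smul_le (𝕜 := ℝ) hs hv x (le_refl ((i : ℕ) : WithTop ℕ∞))
  refine h.trans ?_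
  have hsum : ∑ p ∈ Finset.range (i + 1),
      (i.choose p : ℝ) * ‖iteratedFDeriv ℝ p s x‖ * ‖iteratedFDeriv ℝ (i - p) v x‖
      ≤ ∑ p ∈ Finset.range (i + 1), (i.choose p : ℝ) * (A * B) := by
    refine Finset.sum_le_sum (fun p hp => ?_)
    have hp' : p ≤ i := Nat.lt_succ_iff.mp (Finset.mem_range.mp hp)
    rw [mul_assoc]
    refine mul_le_mul_of_nonneg_left ?_ (by positivity)
    exact mul_le_mul (hA p hp') (hB (i - p) (Nat.sub_le i p)) (norm_nonneg _) hA0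
  refine hsum.trans ?_
  rw [← Finset.sum_mul]
  have : (∑ p ∈ Finset.range (i + 1), (i.choose p : ℝ)) = 2 ^ i := by
    rw [← Nat.cast_sum]
    norm_cast
    exact Nat.sum_range_choose i
  rw [this]

lemma norm_two_mul {c : E2 → ℝ} {p : ℕ} (hc : ContDiff ℝ (p : ℕ) c) (x : E2) :
    ‖iteratedFDeriv ℝ p (fun y => 2 * c y) x‖ = 2 * ‖iteratedFDeriv ℝ p c x‖ := by
  have h2 : (fun y => 2 * c y) = fun y => (2 : ℝ) • c y := by
    funext y; rw [smul_eq_mul]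
  rw [h2, iteratedFDeriv_const_smul_apply' hc.contDiffAt, norm_smul]
  simp

lemma norm_Phi_le {k : ℕ} {ξ f : E2 → E2} {K : ℝ} {x : E2}
    (hξ : ContDiff ℝ ((k + 3 : ℕ)) ξ) (hf : ContDiff ℝ ((k + 3 : ℕ)) f)
    (hK : ∀ q : ℕ, q ≤ k + 3 → ‖iteratedFDeriv ℝ q ξ x‖ ≤ K)
    {i : ℕ} (hi : i ≤ k) :
    ‖iteratedFDeriv ℝ i (Phi ξ f) x‖ ≤
      24 * 2 ^ k * K * ∑ q ∈ Finset.range (k + 3), ‖iteratedFDeriv ℝ q f x‖ := by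
  set M : ℝ := ∑ q ∈ Finset.range (k + 3), ‖iteratedFDeriv ℝ q f x‖ with hM
  have hK0 : 0 ≤ K := (norm_nonneg _).trans (hK 0 (by omega))
  have hM0 : 0 ≤ M := Finset.sum_nonneg (fun q _ => norm_nonneg _)
  have hMq : ∀ q, q ≤ k + 2 → ‖iteratedFDeriv ℝ q f x‖ ≤ M := fun q hq =>
    Finset.single_le_sum (f := fun q => ‖iteratedFDeriv ℝ q f x‖)
      (fun q _ => norm_nonneg _) (Finset.mem_range.mpr (by omega))
  -- ContDiff of pieces at level i
  have hcξ : ∀ j : Fin 2, ContDiff ℝ ((k + 3 : ℕ)) (cpt j ξ) := fun j => contDiff_cpt hξ j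
  have hcf : ∀ j : Fin 2, ContDiff ℝ ((k + 3 : ℕ)) (cpt j f) := fun j => contDiff_cpt hf j
  have hpξ : ∀ j m : Fin 2, ContDiff ℝ ((k + 2 : ℕ)) (pds m (cpt j ξ)) := fun j m =>
    contDiff_pds_nat (hcξ j) (by omega) m
  have hpf : ∀ j m : Fin 2, ContDiff ℝ ((k + 2 : ℕ)) (pds m (cpt j f)) := fun j m =>
    contDiff_pds_nat (hcf j) (by omega) m
  have hwξ : ∀ j : Fin 2, ContDiff ℝ ((k + 2 : ℕ)) (wv ξ j) := fun j =>
    contDiff_wv_nat hξ (by omega) j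
  have hs1 : ∀ j m : Fin 2, ContDiff ℝ (i : ℕ) (pds m (pds m (cpt j ξ))) := fun j m =>
    cdof (contDiff_pds_nat (n := k + 1) (hpξ j m) (by omega) m) (by omega)
  have hv1 : ∀ j : Fin 2, ContDiff ℝ (i : ℕ) (pd j f) := fun j =>
    cdof (contDiff_pd_nat (n := k + 2) hf (by omega) j) (by omega)
  have hs2 : ∀ j m : Fin 2, ContDiff ℝ (i : ℕ) (fun y => 2 * pds m (cpt j ξ) y) :=
    fun j m => contDiff_const.mul (cdof (hpξ j m) (by omega))
  have hv2 : ∀ j m : Fin 2, ContDiff ℝ (i : ℕ) (pd m (pd j f)) := fun j m =>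
    cdof (contDiff_pd_nat (n := k + 1)
      (contDiff_pd_nat (n := k + 2) hf (by omega) j) (by omega) m) (by omega)
  have hs3 : ∀ j m : Fin 2, ContDiff ℝ (i : ℕ) (fun y => 2 * pds m (cpt j f) y) :=
    fun j m => contDiff_const.mul (cdof (hpf j m) (by omega))
  have hv3 : ∀ j m : Fin 2, ContDiff ℝ (i : ℕ) (pd m (wv ξ j)) := fun j m =>
    cdof (contDiff_pd_nat (n := k + 1) (hwξ j) (by omega) m) (by omega)
  have hs4 : ∀ j : Fin 2, ContDiff ℝ (i : ℕ) (cpt j f) := fun j => cdof (hcf j) (by omega)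
  have hv4 : ∀ j m : Fin 2, ContDiff ℝ (i : ℕ) (pd m (pd m (wv ξ j))) := fun j m =>
    cdof (contDiff_pd_nat (n := k)
      (contDiff_pd_nat (n := k + 1) (hwξ j) (by omega) m) (by omega) m) (by omega)
  -- norm bounds for all p ≤ i
  have hA1 : ∀ j m : Fin 2, ∀ p, p ≤ i → ‖iteratedFDeriv ℝ p (pds m (pds m (cpt j ξ))) x‖ ≤ K := by
    intro j m p hp
    calc ‖iteratedFDeriv ℝ p (pds m (pds m (cpt j ξ))) x‖
        ≤ ‖iteratedFDeriv ℝ (p + 1) (pds m (cpt j ξ)) x‖ :=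
          norm_pds_le (hpξ j m) (by omega) m x
      _ ≤ ‖iteratedFDeriv ℝ (p + 1 + 1) (cpt j ξ) x‖ := norm_pds_le (hcξ j) (by omega) m x
      _ ≤ ‖iteratedFDeriv ℝ (p + 1 + 1) ξ x‖ := norm_cpt_le hξ (by omega) j x
      _ ≤ K := hK _ (by omega)
  have hB1 : ∀ j : Fin 2, ∀ p, p ≤ i → ‖iteratedFDeriv ℝ p (pd j f) x‖ ≤ M := by
    intro j p hp
    calc ‖iteratedFDeriv ℝ p (pd j f) x‖ ≤ ‖iteratedFDeriv ℝ (p + 1) f x‖ :=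
          norm_pd_le hf (by omega) j x
      _ ≤ M := hMq _ (by omega)
  have hA2 : ∀ j m : Fin 2, ∀ p, p ≤ i →
      ‖iteratedFDeriv ℝ p (fun y => 2 * pds m (cpt j ξ) y) x‖ ≤ 2 * K := by
    intro j m p hp
    rw [norm_two_mul (cdof (hpξ j m) (by omega)) x]
    have : ‖iteratedFDeriv ℝ p (pds m (cpt j ξ)) x‖ ≤ K := by
      calc ‖iteratedFDeriv ℝ p (pds m (cpt j ξ)) x‖
          ≤ ‖iteratedFDeriv ℝ (p + 1) (cpt j ξ) x‖ := norm_pds_le (hcξ j) (by omega) m x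
        _ ≤ ‖iteratedFDeriv ℝ (p + 1) ξ x‖ := norm_cpt_le hξ (by omega) j x
        _ ≤ K := hK _ (by omega)
    linarith
  have hB2 : ∀ j m : Fin 2, ∀ p, p ≤ i → ‖iteratedFDeriv ℝ p (pd m (pd j f)) x‖ ≤ M := by
    intro j m p hp
    calc ‖iteratedFDeriv ℝ p (pd m (pd j f)) x‖
        ≤ ‖iteratedFDeriv ℝ (p + 1) (pd j f) x‖ :=
          norm_pd_le (contDiff_pd_nat hf (by omega) j : ContDiff ℝ ((k + 2 : ℕ)) (pd j f))
            (by omega) m x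
      _ ≤ ‖iteratedFDeriv ℝ (p + 1 + 1) f x‖ := norm_pd_le hf (by omega) j x
      _ ≤ M := hMq _ (by omega)
  have hA3 : ∀ j m : Fin 2, ∀ p, p ≤ i →
      ‖iteratedFDeriv ℝ p (fun y => 2 * pds m (cpt j f) y) x‖ ≤ 2 * M := by
    intro j m p hp
    rw [norm_two_mul (cdof (hpf j m) (by omega)) x]
    have : ‖iteratedFDeriv ℝ p (pds m (cpt j f)) x‖ ≤ M := by
      calc ‖iteratedFDeriv ℝ p (pds m (cpt j f)) x‖
          ≤ ‖iteratedFDeriv ℝ (p + 1) (cpt j f) x‖ := norm_pds_le (hcf j) (by omega) m x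
        _ ≤ ‖iteratedFDeriv ℝ (p + 1) f x‖ := norm_cpt_le hf (by omega) j x
        _ ≤ M := hMq _ (by omega)
    linarith
  have hB3 : ∀ j m : Fin 2, ∀ p, p ≤ i → ‖iteratedFDeriv ℝ p (pd m (wv ξ j)) x‖ ≤ K := by
    intro j m p hp
    calc ‖iteratedFDeriv ℝ p (pd m (wv ξ j)) x‖
        ≤ ‖iteratedFDeriv ℝ (p + 1) (wv ξ j) x‖ := norm_pd_le (hwξ j) (by omega) m x
      _ ≤ ‖iteratedFDeriv ℝ (p + 1 + 1) ξ x‖ := norm_wv_le hξ (by omega) j x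
      _ ≤ K := hK _ (by omega)
  have hA4 : ∀ j : Fin 2, ∀ p, p ≤ i → ‖iteratedFDeriv ℝ p (cpt j f) x‖ ≤ M := by
    intro j p hp
    calc ‖iteratedFDeriv ℝ p (cpt j f) x‖ ≤ ‖iteratedFDeriv ℝ p f x‖ :=
          norm_cpt_le hf (by omega) j x
      _ ≤ M := hMq _ (by omega)
  have hB4 : ∀ j m : Fin 2, ∀ p, p ≤ i → ‖iteratedFDeriv ℝ p (pd m (pd m (wv ξ j))) x‖ ≤ K := by
    intro j m p hp
    calc ‖iteratedFDeriv ℝ p (pd m (pd m (wv ξ j))) x‖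
        ≤ ‖iteratedFDeriv ℝ (p + 1) (pd m (wv ξ j)) x‖ :=
          norm_pd_le (contDiff_pd_nat (hwξ j) (by omega) m :
            ContDiff ℝ ((k + 1 : ℕ)) (pd m (wv ξ j))) (by omega) m x
      _ ≤ ‖iteratedFDeriv ℝ (p + 1 + 1) (wv ξ j) x‖ := norm_pd_le (hwξ j) (by omega) m x
      _ ≤ ‖iteratedFDeriv ℝ (p + 1 + 1 + 1) ξ x‖ := norm_wv_le hξ (by omega) j x
      _ ≤ K := hK _ (by omega)
  -- the four smul terms
  set G : Fin 2 → Fin 2 → E2 → E2 := fun m j => fun y =>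
    pds m (pds m (cpt j ξ)) y • pd j f y + (2 * pds m (cpt j ξ) y) • pd m (pd j f) y
      + ((2 * pds m (cpt j f) y) • pd m (wv ξ j) y + cpt j f y • pd m (pd m (wv ξ j)) y)
    with hG
  have hGc : ∀ m j : Fin 2, ContDiff ℝ (i : ℕ) (G m j) := fun m j =>
    (((hs1 j m).smul (hv1 j)).add ((hs2 j m).smul (hv2 j m))).add
      (((hs3 j m).smul (hv3 j m)).add ((hs4 j).smul (hv4 j m)))
  have hGb : ∀ m j : Fin 2, ‖iteratedFDeriv ℝ i (G m j) x‖ ≤ 6 * 2 ^ i * (K * M) := by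
    intro m j
    have e1 := smul_term_bound (hs1 j m) (hv1 j) (hA1 j m) (hB1 j) hK0 hM0
    have e2 := smul_term_bound (hs2 j m) (hv2 j m) (hA2 j m) (hB2 j m) (by linarith) hM0
    have e3 := smul_term_bound (hs3 j m) (hv3 j m) (hA3 j m) (hB3 j m) (by linarith) hK0
    have e4 := smul_term_bound (hs4 j) (hv4 j m) (hA4 j) (hB4 j m) hM0 hK0
    have hsplit : iteratedFDeriv ℝ i (G m j) x =
        iteratedFDeriv ℝ i (fun y => pds m (pds m (cpt j ξ)) y • pd j f y) x
        + iteratedFDeriv ℝ i (fun y => (2 * pds m (cpt j ξ) y) • pd m (pd j f) y) x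
        + (iteratedFDeriv ℝ i (fun y => (2 * pds m (cpt j f) y) • pd m (wv ξ j) y) x
          + iteratedFDeriv ℝ i (fun y => cpt j f y • pd m (pd m (wv ξ j)) y) x) := by
      rw [hG]
      rw [iteratedFDeriv_add_apply' (((hs1 j m).fun_smul (hv1 j)).add ((hs2 j m).fun_smul (hv2 j m))).contDiffAt
          (((hs3 j m).fun_smul (hv3 j m)).add ((hs4 j).fun_smul (hv4 j m))).contDiffAt,
        iteratedFDeriv_add_apply' ((hs1 j m).fun_smul (hv1 j)).contDiffAt ((hs2 j m).fun_smul (hv2 j m)).contDiffAt,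
        iteratedFDeriv_add_apply' ((hs3 j m).fun_smul (hv3 j m)).contDiffAt ((hs4 j).fun_smul (hv4 j m)).contDiffAt]
    calc ‖iteratedFDeriv ℝ i (G m j) x‖
        ≤ 2 ^ i * (K * M) + 2 ^ i * (2 * K * M) + (2 ^ i * (2 * M * K) + 2 ^ i * (M * K)) := by
          rw [hsplit]
          refine (norm_add_le _ _).trans ?_
          refine le_trans (add_le_add (norm_add_le _ _) (norm_add_le _ _)) ?_
          exact add_le_add (add_le_add e1 e2) (add_le_add e3 e4)
      _ = 6 * 2 ^ i * (K * M) := by ring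
  have hPhi : Phi ξ f = fun y => ∑ m : Fin 2, (fun z => ∑ j : Fin 2, G m j z) y := rfl
  have houter : iteratedFDeriv ℝ i (Phi ξ f) =
      ∑ m : Fin 2, iteratedFDeriv ℝ i (fun z => ∑ j : Fin 2, G m j z) := by
    rw [hPhi]
    exact iteratedFDeriv_sum (fun m _ => ContDiff.sum (fun j _ => hGc m j))
  have hinner : ∀ m : Fin 2, iteratedFDeriv ℝ i (fun z => ∑ j : Fin 2, G m j z) =
      ∑ j : Fin 2, iteratedFDeriv ℝ i (G m j) := fun m =>
    iteratedFDeriv_sum (fun j _ => hGc m j)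
  calc ‖iteratedFDeriv ℝ i (Phi ξ f) x‖
      = ‖∑ m : Fin 2, ∑ j : Fin 2, iteratedFDeriv ℝ i (G m j) x‖ := by
        rw [houter]
        simp only [Finset.sum_apply]
        congr 1
        refine Finset.sum_congr rfl (fun m _ => ?_)
        rw [hinner m]
        simp [Finset.sum_apply]
    _ ≤ ∑ m : Fin 2, ∑ j : Fin 2, ‖iteratedFDeriv ℝ i (G m j) x‖ := by
        refine (norm_sum_le _ _).trans ?_
        exact Finset.sum_le_sum (fun m _ => norm_sum_le _ _)
    _ ≤ ∑ _m : Fin 2, ∑ _j : Fin 2, 6 * 2 ^ i * (K * M) := by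
        refine Finset.sum_le_sum (fun m _ => Finset.sum_le_sum (fun j _ => hGb m j))
    _ = 24 * 2 ^ i * (K * M) := by
        simp [Finset.sum_const]
        ring
    _ ≤ 24 * 2 ^ k * K * M := by
        have h2 : (2 : ℝ) ^ i ≤ 2 ^ k := pow_le_pow_right₀ one_le_two hi
        have : (0:ℝ) ≤ K * M := mul_nonneg hK0 hM0
        nlinarith

lemma contDiff_Phi {k : ℕ} {ξ f : E2 → E2} (hξ : ContDiff ℝ ((k + 3 : ℕ)) ξ)
    (hf : ContDiff ℝ ((k + 3 : ℕ)) f) : ContDiff ℝ (k : ℕ) (Phi ξ f) := by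
  have hG : ∀ m j : Fin 2, ContDiff ℝ (k : ℕ) (fun y =>
      pds m (pds m (cpt j ξ)) y • pd j f y + (2 * pds m (cpt j ξ) y) • pd m (pd j f) y
        + ((2 * pds m (cpt j f) y) • pd m (wv ξ j) y + cpt j f y • pd m (pd m (wv ξ j)) y)) := by
    intro m j
    have hs1 : ContDiff ℝ (k : ℕ) (pds m (pds m (cpt j ξ))) :=
      cdof (contDiff_pds_nat (n := k + 1)
        (contDiff_pds_nat (n := k + 2) (contDiff_cpt hξ j) (by omega) m) (by omega) m) (by omega)
    have hv1 : ContDiff ℝ (k : ℕ) (pd j f) :=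
      cdof (contDiff_pd_nat (n := k + 2) hf (by omega) j) (by omega)
    have hs2 : ContDiff ℝ (k : ℕ) (fun y => 2 * pds m (cpt j ξ) y) :=
      contDiff_const.mul (cdof (contDiff_pds_nat (n := k + 2) (contDiff_cpt hξ j)
        (by omega) m) (by omega))
    have hv2 : ContDiff ℝ (k : ℕ) (pd m (pd j f)) :=
      cdof (contDiff_pd_nat (n := k + 1)
        (contDiff_pd_nat (n := k + 2) hf (by omega) j) (by omega) m) (by omega)
    have hs3 : ContDiff ℝ (k : ℕ) (fun y => 2 * pds m (cpt j f) y) :=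
      contDiff_const.mul (cdof (contDiff_pds_nat (n := k + 2) (contDiff_cpt hf j)
        (by omega) m) (by omega))
    have hv3 : ContDiff ℝ (k : ℕ) (pd m (wv ξ j)) :=
      cdof (contDiff_pd_nat (n := k + 1) (contDiff_wv_nat (n := k + 2) hξ (by omega) j)
        (by omega) m) (by omega)
    have hs4 : ContDiff ℝ (k : ℕ) (cpt j f) := cdof (contDiff_cpt hf j) (by omega)
    have hv4 : ContDiff ℝ (k : ℕ) (pd m (pd m (wv ξ j))) :=
      cdof (contDiff_pd_nat (n := k)
        (contDiff_pd_nat (n := k + 1) (contDiff_wv_nat (n := k + 2) hξ (by omega) j)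
          (by omega) m) (by omega) m) (by omega)
    exact ((hs1.smul hv1).add (hs2.smul hv2)).add ((hs3.smul hv3).add (hs4.smul hv4))
  have : Phi ξ f = fun y => ∑ m : Fin 2, ∑ j : Fin 2, (fun y =>
      pds m (pds m (cpt j ξ)) y • pd j f y + (2 * pds m (cpt j ξ) y) • pd m (pd j f) y
        + ((2 * pds m (cpt j f) y) • pd m (wv ξ j) y + cpt j f y • pd m (pd m (wv ξ j)) y)) y :=
    rfl
  rw [this]
  exact ContDiff.sum (fun m _ => ContDiff.sum (fun j _ => hG m j))


/-- The commutator `[Δ, B]` is of second order: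
`‖[Δ,B] f‖_{W^{k,2}} ≤ c ‖ξ‖_{W^{k+3,∞}} ‖f‖_{W^{k+2,2}}` — one derivative fewer
than the naive count, since the third-order terms in `ΔB` and `BΔ` cancel. -/
theorem stmt15 (O : Set E2) (hO : IsOpen O) (hOb : Bornology.IsBounded O) (k : ℕ) :
    ∃ c : ℝ, ∀ (ξ f : E2 → E2) (K : ℝ),
      ContDiff ℝ (k + 3) ξ → ContDiff ℝ (k + 3) f →
      -- ξ divergence-free
      (∀ x ∈ O, ∑ j : Fin 2, pd j ξ x j = 0) →
      -- ‖ξ‖_{W^{k+3,∞}} ≤ K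
      (∀ i : ℕ, i ≤ k + 3 → ∀ x ∈ O, ‖iteratedFDeriv ℝ i ξ x‖ ≤ K) →
      -- f ∈ W^{k+2,2}(O)
      (∀ i : ℕ, i ≤ k + 2 → IntegrableOn (fun x => ‖iteratedFDeriv ℝ i f x‖ ^ 2) O) →
      nHk O k (commDB ξ f) ≤ c * K * nHk O (k + 2) f := by
  refine ⟨24 * 2 ^ k * Real.sqrt (((k : ℝ) + 1) * ((k : ℝ) + 3)), ?_⟩
  intro ξ f K hξ hf _hdiv hK hInt
  have hξ' : ContDiff ℝ ((k + 3 : ℕ)) ξ := by exact_mod_cast hξ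
  have hf' : ContDiff ℝ ((k + 3 : ℕ)) f := by exact_mod_cast hf
  have hid : commDB ξ f = Phi ξ f := by
    refine commDB_eq_Phi ?_ ?_
    · exact_mod_cast cdof hξ' (by omega : 3 ≤ k + 3)
    · exact_mod_cast cdof hf' (by omega : 3 ≤ k + 3)
  rcases Set.eq_empty_or_nonempty O with hOe | hOne
  · subst hOe
    simp [nHk, MeasureTheory.Measure.restrict_empty]
  obtain ⟨x₀, hx₀⟩ := hOne
  have hK0 : 0 ≤ K := (norm_nonneg _).trans (hK 0 (by omega) x₀ hx₀)
  have hPhiC : ContDiff ℝ (k : ℕ) (Phi ξ f) := contDiff_Phi hξ' hf'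
  have hrange : k + 2 + 1 = k + 3 := by omega
  set S2 : ℝ := ∑ q ∈ Finset.range (k + 3), ∫ x in O, ‖iteratedFDeriv ℝ q f x‖ ^ 2 with hS2
  have hS2nn : 0 ≤ S2 := Finset.sum_nonneg (fun q _ =>
    setIntegral_nonneg hO.measurableSet (fun x _ => by positivity))
  set c2 : ℝ := (24 * 2 ^ k * K) ^ 2 * ((k : ℝ) + 3) with hc2
  have hc2nn : 0 ≤ c2 := by positivity
  have hIntR : IntegrableOn (fun x => ∑ q ∈ Finset.range (k + 3),
      ‖iteratedFDeriv ℝ q f x‖ ^ 2) O := by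
    exact integrable_finset_sum _ (fun q hq =>
      hInt q (by have := Finset.mem_range.mp hq; omega))
  -- per-i integral bound
  have key : ∀ i ∈ Finset.range (k + 1),
      (∫ x in O, ‖iteratedFDeriv ℝ i (commDB ξ f) x‖ ^ 2) ≤ c2 * S2 := by
    intro i hi
    have hik : i ≤ k := by have := Finset.mem_range.mp hi; omega
    have hIntL : IntegrableOn (fun x => ‖iteratedFDeriv ℝ i (commDB ξ f) x‖ ^ 2) O := by
      rw [hid]
      have hc : Continuous fun x => ‖iteratedFDeriv ℝ i (Phi ξ f) x‖ ^ 2 :=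
        ((hPhiC.continuous_iteratedFDeriv (by exact_mod_cast hik)).norm).pow 2
      exact (hc.continuousOn.integrableOn_compact hOb.isCompact_closure).mono_set
        subset_closure
    have hIntR2 : IntegrableOn (fun x => c2 * ∑ q ∈ Finset.range (k + 3),
        ‖iteratedFDeriv ℝ q f x‖ ^ 2) O := hIntR.const_mul c2
    have hpw : ∀ x ∈ O, ‖iteratedFDeriv ℝ i (commDB ξ f) x‖ ^ 2 ≤
        c2 * ∑ q ∈ Finset.range (k + 3), ‖iteratedFDeriv ℝ q f x‖ ^ 2 := by
      intro x hx
      have h1 : ‖iteratedFDeriv ℝ i (commDB ξ f) x‖ ≤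
          24 * 2 ^ k * K * ∑ q ∈ Finset.range (k + 3), ‖iteratedFDeriv ℝ q f x‖ := by
        rw [hid]
        exact norm_Phi_le hξ' hf' (fun q hq => hK q hq x hx) hik
      have h2 : ‖iteratedFDeriv ℝ i (commDB ξ f) x‖ ^ 2 ≤
          (24 * 2 ^ k * K * ∑ q ∈ Finset.range (k + 3), ‖iteratedFDeriv ℝ q f x‖) ^ 2 :=
        pow_le_pow_left₀ (norm_nonneg _) h1 2
      refine h2.trans ?_
      have h3 : (∑ q ∈ Finset.range (k + 3), ‖iteratedFDeriv ℝ q f x‖) ^ 2 ≤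
          ((k : ℝ) + 3) * ∑ q ∈ Finset.range (k + 3), ‖iteratedFDeriv ℝ q f x‖ ^ 2 := by
        have h := sq_sum_le_card_mul_sum_sq (s := Finset.range (k + 3))
          (f := fun q => ‖iteratedFDeriv ℝ q f x‖)
        rw [Finset.card_range] at h
        push_cast at h
        linarith
      calc (24 * 2 ^ k * K * ∑ q ∈ Finset.range (k + 3), ‖iteratedFDeriv ℝ q f x‖) ^ 2
          = (24 * 2 ^ k * K) ^ 2 *
            (∑ q ∈ Finset.range (k + 3), ‖iteratedFDeriv ℝ q f x‖) ^ 2 := by ring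
        _ ≤ (24 * 2 ^ k * K) ^ 2 *
            (((k : ℝ) + 3) * ∑ q ∈ Finset.range (k + 3), ‖iteratedFDeriv ℝ q f x‖ ^ 2) := by
            exact mul_le_mul_of_nonneg_left h3 (by positivity)
        _ = c2 * ∑ q ∈ Finset.range (k + 3), ‖iteratedFDeriv ℝ q f x‖ ^ 2 := by
            rw [hc2]; ring
    calc (∫ x in O, ‖iteratedFDeriv ℝ i (commDB ξ f) x‖ ^ 2)
        ≤ ∫ x in O, c2 * ∑ q ∈ Finset.range (k + 3), ‖iteratedFDeriv ℝ q f x‖ ^ 2 :=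
          setIntegral_mono_on hIntL hIntR2 hO.measurableSet hpw
      _ = c2 * ∫ x in O, ∑ q ∈ Finset.range (k + 3), ‖iteratedFDeriv ℝ q f x‖ ^ 2 :=
          integral_const_mul c2 _
      _ = c2 * S2 := by
          rw [hS2, integral_finset_sum _ (fun q hq =>
            hInt q (by have := Finset.mem_range.mp hq; omega))]
  have hsum : (∑ i ∈ Finset.range (k + 1), ∫ x in O, ‖iteratedFDeriv ℝ i (commDB ξ f) x‖ ^ 2)
      ≤ ((k : ℝ) + 1) * (c2 * S2) := by
    calc (∑ i ∈ Finset.range (k + 1), ∫ x in O, ‖iteratedFDeriv ℝ i (commDB ξ f) x‖ ^ 2)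
        ≤ ∑ _i ∈ Finset.range (k + 1), c2 * S2 := Finset.sum_le_sum key
      _ = ((k : ℝ) + 1) * (c2 * S2) := by
          rw [Finset.sum_const, Finset.card_range, nsmul_eq_mul]; push_cast; ring
  have h5 : nHk O k (commDB ξ f) ≤ Real.sqrt (((k : ℝ) + 1) * (c2 * S2)) := by
    rw [nHk]
    exact Real.sqrt_le_sqrt hsum
  refine h5.trans ?_
  have hnHk2 : nHk O (k + 2) f = Real.sqrt S2 := by
    rw [nHk, hrange, hS2]
  rw [hnHk2]
  have heq : ((k : ℝ) + 1) * (c2 * S2) =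
      ((((k : ℝ) + 1) * ((k : ℝ) + 3)) * (24 * 2 ^ k * K) ^ 2) * S2 := by
    rw [hc2]; ring
  rw [heq, Real.sqrt_mul (by positivity) S2, Real.sqrt_mul (by positivity) ((24 * 2^k * K)^2),
    Real.sqrt_sq (by positivity)]
  ring_nf
  exact le_refl _
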